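/- Assume A(p̌) is nonsingular, let C = A(p̌)^{-1}, x̌ = C a(p̌), Δ = Σ_{k=1}^K |C A_k| p̂_k, and assume ρ(Δ) < 1. Define F ∈ ℝ^{n×K} with columns a₁,…,a_K, G ∈ ℝ^{n×K} with columns A₁x̌,…,A_K x̌, B⁰ = C(F − G), H̄ = (I − Δ)^{-1}, the matrix H_ by (H_)_{ij} = −H̄_{ij} for i ≠ j and (H_)_{jj} = H̄_{jj}/(2H̄_{jj} − 1), Ȟ = (H̄ + H_)/2, Ĥ = (H̄ − H_)/2, V = Ȟ B⁰ and l̂ = Ĥ |B⁰| p̂. Then for every p ∈ 𝐩 the matrix A(p) is invertible and there exists l ∈ ℝⁿ with |l_i| ≤ l̂_i for all i such that A(p)^{-1} a(p) = x̌ + V (p − p̌) + l; in particular Σᵖ ⊆ { x̌ + V q + l : q ∈ ℝ^K, |q| ≤ p̂, l ∈ ℝⁿ, |l| ≤ l̂ }. (Part (ii) of Kolev's theorem: the p,l-solution x(p', l) = x̌ + V p' + l encloses the united parametric solution set.) -/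

import Mathlib

open Matrix

/-- Spectral radius of a real square matrix: the maximum modulus of its
complex eigenvalues, formalized via the spectral radius of the matrix
viewed over `ℂ`. -/
noncomputable def specRad {n : ℕ} (M : Matrix (Fin n) (Fin n) ℝ) : ENNReal :=
  spectralRadius ℂ (M.map (algebraMap ℝ ℂ))

open Filter

section spec
variable {n : ℕ}
attribute [local instance] Matrix.linftyOpNormedRing Matrix.linftyOpNormedAlgebra
  Matrix.linftyOpNormedSpace

local instance : CompleteSpace (Matrix (Fin n) (Fin n) ℂ) :=
  FiniteDimensional.complete ℂ (Matrix (Fin n) (Fin n) ℂ)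

lemma abs_entry_pow_tendsto (Δ : Matrix (Fin n) (Fin n) ℝ) (h : specRad Δ < 1) (i j : Fin n) :
    Tendsto (fun m : ℕ => |(Δ ^ m) i j|) atTop (nhds 0) := by
  set N : Matrix (Fin n) (Fin n) ℂ := Δ.map (algebraMap ℝ ℂ) with hN
  have hgel := spectrum.pow_nnnorm_pow_one_div_tendsto_nhds_spectralRadius N
  obtain ⟨c, hc1, hc2⟩ := exists_between h
  have hcne : c ≠ ⊤ := ne_top_of_lt (hc2.trans_le le_top)
  set r : NNReal := c.toNNReal with hr
  have hrc : (r : ENNReal) = c := ENNReal.coe_toNNReal hcne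
  have hr1 : (r : ℝ) < 1 := by
    have := hc2
    rw [← hrc] at this
    exact_mod_cast this
  have hr0 : (0:ℝ) ≤ r := r.coe_nonneg
  -- eventually ‖N^m‖ ≤ r^m
  have hev : ∀ᶠ m : ℕ in atTop, ‖N ^ m‖ ≤ (r:ℝ) ^ m := by
    have h2 : ∀ᶠ m : ℕ in atTop, (‖N ^ m‖₊ : ENNReal) ^ (1 / (m:ℝ)) < c :=
      hgel.eventually_lt_const (by rwa [specRad] at hc1)
    filter_upwards [h2, eventually_ge_atTop 1] with m hm hm1
    have hmne : (m : ℝ) ≠ 0 := by positivity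
    have : ((‖N ^ m‖₊ : ENNReal) ^ (1 / (m:ℝ))) ^ (m:ℝ) ≤ c ^ (m:ℝ) := by
      exact ENNReal.rpow_le_rpow hm.le (by positivity)
    rw [← ENNReal.rpow_mul, one_div, inv_mul_cancel₀ hmne, ENNReal.rpow_one,
      ENNReal.rpow_natCast] at this
    rw [← hrc, ← ENNReal.coe_pow, ENNReal.coe_le_coe] at this
    exact_mod_cast this
  have hnorm : Tendsto (fun m : ℕ => ‖N ^ m‖) atTop (nhds 0) := by
    have hgeo : Tendsto (fun m : ℕ => (r:ℝ) ^ m) atTop (nhds 0) :=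
      tendsto_pow_atTop_nhds_zero_of_lt_one hr0 hr1
    refine squeeze_zero' (Eventually.of_forall fun m => norm_nonneg _) hev hgeo
  -- entrywise
  have hentry : ∀ m : ℕ, |(Δ ^ m) i j| ≤ ‖N ^ m‖ := by
    intro m
    have hmap : N ^ m = (Δ ^ m).map (algebraMap ℝ ℂ) := by
      rw [hN]; simpa using (map_pow ((algebraMap ℝ ℂ).mapMatrix) Δ m).symm
    have h1 : |(Δ ^ m) i j| = ‖(N ^ m) i j‖ := by
      rw [hmap]; simp [Matrix.map_apply, Complex.norm_real]
    rw [h1]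
    have : ‖(N ^ m) i j‖₊ ≤ ‖N ^ m‖₊ := by
      have e1 : ‖(N ^ m) i j‖₊ ≤ ∑ j', ‖(N ^ m) i j'‖₊ :=
        Finset.single_le_sum (f := fun j' => ‖(N ^ m) i j'‖₊) (fun _ _ => zero_le)
          (Finset.mem_univ j)
      have e2 : ∑ j', ‖(N ^ m) i j'‖₊ ≤ ⨆ i', ∑ j', ‖(N ^ m) i' j'‖₊ :=
        le_ciSup (f := fun i' => ∑ j', ‖(N ^ m) i' j'‖₊) (Set.Finite.bddAbove (Set.finite_range _)) i
      rw [Matrix.linfty_opNNNorm_def]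
      exact e1.trans (Finset.le_sup (f := fun i' => ∑ j', ‖(N ^ m) i' j'‖₊) (Finset.mem_univ i))
    exact_mod_cast this
  exact squeeze_zero (fun m => abs_nonneg _) hentry hnorm
end spec


section real
variable {n : ℕ}

lemma mulVec_mono {B : Matrix (Fin n) (Fin n) ℝ} (hB : ∀ i j, 0 ≤ B i j)
    {x y : Fin n → ℝ} (h : ∀ i, x i ≤ y i) : ∀ i, B.mulVec x i ≤ B.mulVec y i := by
  intro i
  simp only [Matrix.mulVec, dotProduct]
  exact Finset.sum_le_sum fun j _ => mul_le_mul_of_nonneg_left (h j) (hB i j)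

lemma mulVec_nonneg {B : Matrix (Fin n) (Fin n) ℝ} (hB : ∀ i j, 0 ≤ B i j)
    {x : Fin n → ℝ} (hx : ∀ i, 0 ≤ x i) : ∀ i, 0 ≤ B.mulVec x i := by
  intro i
  simp only [Matrix.mulVec, dotProduct]
  exact Finset.sum_nonneg fun j _ => mul_nonneg (hB i j) (hx j)

lemma pow_entry_nonneg {Δ : Matrix (Fin n) (Fin n) ℝ} (hnn : ∀ i j, 0 ≤ Δ i j) :
    ∀ m i j, 0 ≤ (Δ ^ m) i j := by
  intro m
  induction m with
  | zero => intro i j; rw [pow_zero]; by_cases h : i = j <;> simp [Matrix.one_apply, h]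
  | succ m ih =>
    intro i j
    rw [pow_succ, Matrix.mul_apply]
    exact Finset.sum_nonneg fun k _ => mul_nonneg (ih i k) (hnn k j)

lemma mul_entry_nonneg {B C : Matrix (Fin n) (Fin n) ℝ} (hB : ∀ i j, 0 ≤ B i j)
    (hC : ∀ i j, 0 ≤ C i j) : ∀ i j, 0 ≤ (B * C) i j := by
  intro i j
  rw [Matrix.mul_apply]
  exact Finset.sum_nonneg fun k _ => mul_nonneg (hB i k) (hC k j)

lemma abs_mulVec_le {D Δ : Matrix (Fin n) (Fin n) ℝ} (hD : ∀ i j, |D i j| ≤ Δ i j)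
    {v : Fin n → ℝ} : ∀ i, |D.mulVec v i| ≤ Δ.mulVec (fun j => |v j|) i := by
  intro i
  simp only [Matrix.mulVec, dotProduct]
  calc |∑ j, D i j * v j| ≤ ∑ j, |D i j * v j| := Finset.abs_sum_le_sum_abs _ _
    _ ≤ ∑ j, Δ i j * |v j| := by
        refine Finset.sum_le_sum fun j _ => ?_
        rw [abs_mul]
        exact mul_le_mul_of_nonneg_right (hD i j) (abs_nonneg _)

lemma tendsto_pow_mulVec {Δ : Matrix (Fin n) (Fin n) ℝ}
    (htend : ∀ i j, Tendsto (fun m : ℕ => |(Δ ^ m) i j|) atTop (nhds 0))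
    (v : Fin n → ℝ) (i : Fin n) :
    Tendsto (fun m : ℕ => (Δ ^ m).mulVec v i) atTop (nhds 0) := by
  have : ∀ m : ℕ, (Δ ^ m).mulVec v i = ∑ j, (Δ ^ m) i j * v j := fun m => rfl
  simp only [this]
  have h0 : Tendsto (fun m : ℕ => ∑ j : Fin n, (Δ ^ m) i j * v j) atTop (nhds (∑ j : Fin n, 0)) := by
    refine tendsto_finset_sum _ fun j _ => ?_
    have h1 : Tendsto (fun m : ℕ => (Δ ^ m) i j) atTop (nhds 0) :=
      squeeze_zero_norm (fun m => le_of_eq (Real.norm_eq_abs _)) (htend i j)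
    simpa using h1.mul_const (v j)
  simpa using h0
lemma eq_zero_of_le_mulVec {Δ : Matrix (Fin n) (Fin n) ℝ} (hnn : ∀ i j, 0 ≤ Δ i j)
    (htend : ∀ i j, Tendsto (fun m : ℕ => |(Δ ^ m) i j|) atTop (nhds 0))
    {z : Fin n → ℝ} (hz0 : ∀ i, 0 ≤ z i) (hz : ∀ i, z i ≤ Δ.mulVec z i) :
    ∀ i, z i = 0 := by
  have key : ∀ m i, z i ≤ (Δ ^ m).mulVec z i := by
    intro m
    induction m with
    | zero => intro i; rw [pow_zero, Matrix.one_mulVec]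
    | succ m ih =>
      intro i
      have h2 : ∀ i, (Δ ^ m).mulVec z i ≤ (Δ ^ m).mulVec (Δ.mulVec z) i :=
        mulVec_mono (pow_entry_nonneg hnn m) hz
      have h3 : (Δ ^ m).mulVec (Δ.mulVec z) = (Δ ^ (m+1)).mulVec z := by
        rw [Matrix.mulVec_mulVec, ← pow_succ]
      exact (ih i).trans ((h2 i).trans_eq (by rw [h3]))
  intro i
  have h1 : z i ≤ 0 :=
    ge_of_tendsto (tendsto_pow_mulVec htend z i) (Eventually.of_forall fun m => key m i)
  linarith [hz0 i]

lemma isUnit_one_add {Δ D : Matrix (Fin n) (Fin n) ℝ} (hnn : ∀ i j, 0 ≤ Δ i j)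
    (htend : ∀ i j, Tendsto (fun m : ℕ => |(Δ ^ m) i j|) atTop (nhds 0))
    (hD : ∀ i j, |D i j| ≤ Δ i j) : IsUnit (1 + D) := by
  rw [Matrix.isUnit_iff_isUnit_det, isUnit_iff_ne_zero]
  intro hdet
  obtain ⟨v, hv, hv0⟩ := (Matrix.exists_mulVec_eq_zero_iff).mpr hdet
  have hvz : ∀ i, v i + D.mulVec v i = 0 := by
    intro i
    have := congrFun hv0 i
    rwa [Matrix.add_mulVec, Matrix.one_mulVec, Pi.add_apply, Pi.zero_apply] at this
  have habs : ∀ i, |v i| ≤ Δ.mulVec (fun j => |v j|) i := by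
    intro i
    have : v i = -(D.mulVec v i) := by linarith [hvz i]
    rw [this, abs_neg]
    exact abs_mulVec_le hD i
  have := eq_zero_of_le_mulVec hnn htend (fun i => abs_nonneg (v i)) habs
  exact hv (funext fun i => abs_eq_zero.mp (this i))

lemma le_inv_mulVec {Δ H : Matrix (Fin n) (Fin n) ℝ} (hnn : ∀ i j, 0 ≤ Δ i j)
    (htend : ∀ i j, Tendsto (fun m : ℕ => |(Δ ^ m) i j|) atTop (nhds 0))
    (hHl : ((1 : Matrix (Fin n) (Fin n) ℝ) - Δ) * H = 1)
    (hHnn : ∀ i j, 0 ≤ H i j)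
    {z b : Fin n → ℝ} (hb : ∀ i, 0 ≤ b i) (hz : ∀ i, z i ≤ Δ.mulVec z i + b i) :
    ∀ i, z i ≤ H.mulVec b i := by
  set S : ℕ → Matrix (Fin n) (Fin n) ℝ := fun m => ∑ k ∈ Finset.range m, Δ ^ k with hS
  have hSnn : ∀ m i j, 0 ≤ S m i j := by
    intro m i j
    show (0:ℝ) ≤ (∑ k ∈ Finset.range m, Δ ^ k) i j
    rw [Matrix.sum_apply]
    exact Finset.sum_nonneg fun k _ => pow_entry_nonneg hnn k i j
  have hgeom : ∀ m, S m = H - Δ ^ m * H := by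
    intro m
    have h1 : S m * ((1 : Matrix (Fin n) (Fin n) ℝ) - Δ) = 1 - Δ ^ m := by
      have hg := geom_sum_mul Δ m
      calc S m * ((1 : Matrix (Fin n) (Fin n) ℝ) - Δ) = -(S m * (Δ - 1)) := by noncomm_ring
        _ = -(Δ ^ m - 1) := by rw [hg]
        _ = 1 - Δ ^ m := by noncomm_ring
    calc S m = S m * (((1 : Matrix (Fin n) (Fin n) ℝ) - Δ) * H) := by rw [hHl, mul_one]
      _ = (S m * ((1 : Matrix (Fin n) (Fin n) ℝ) - Δ)) * H := by rw [mul_assoc]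
      _ = (1 - Δ ^ m) * H := by rw [h1]
      _ = H - Δ ^ m * H := by rw [sub_mul, one_mul]
  have claim1 : ∀ m i, z i ≤ (Δ ^ m).mulVec z i + (S m).mulVec b i := by
    intro m
    induction m with
    | zero => intro i; simp [hS, pow_zero, Matrix.one_mulVec]
    | succ m ih =>
      intro i
      have h2 := mulVec_mono (pow_entry_nonneg hnn m) hz i
      have h3 : (Δ ^ m).mulVec (fun i => Δ.mulVec z i + b i) i
          = (Δ ^ (m+1)).mulVec z i + (Δ ^ m).mulVec b i := by
        have : (fun i => Δ.mulVec z i + b i) = Δ.mulVec z + b := rfl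
        rw [this, Matrix.mulVec_add, Matrix.mulVec_mulVec, ← pow_succ]
        rfl
      have h4 : S (m+1) = S m + Δ ^ m := by
        rw [hS]
        simp [Finset.sum_range_succ]
      have h5 : (S (m+1)).mulVec b i = (S m).mulVec b i + (Δ ^ m).mulVec b i := by
        rw [h4, Matrix.add_mulVec, Pi.add_apply]
      rw [h5]
      have := (ih i).trans (by rw [← h3] at *; linarith [h2, h3] : (Δ ^ m).mulVec z i + (S m).mulVec b i ≤ (Δ ^ (m+1)).mulVec z i + (Δ ^ m).mulVec b i + (S m).mulVec b i)
      linarith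
  intro i
  have hSle : ∀ m, (S m).mulVec b i ≤ H.mulVec b i := by
    intro m
    have h6 : (S m).mulVec b i = H.mulVec b i - (Δ ^ m * H).mulVec b i := by
      rw [hgeom m, Matrix.sub_mulVec, Pi.sub_apply]
    rw [h6]
    have := mulVec_nonneg (mul_entry_nonneg (pow_entry_nonneg hnn m) hHnn) hb i
    linarith
  have h7 : ∀ m, z i ≤ (Δ ^ m).mulVec z i + H.mulVec b i := fun m =>
    (claim1 m i).trans (by linarith [hSle m])
  have h8 : Tendsto (fun m : ℕ => (Δ ^ m).mulVec z i + H.mulVec b i) atTop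
      (nhds (H.mulVec b i)) := by
    simpa using (tendsto_pow_mulVec htend z i).add_const (H.mulVec b i)
  exact ge_of_tendsto h8 (Eventually.of_forall h7)
lemma inv_entry_nonneg {Δ H : Matrix (Fin n) (Fin n) ℝ} (hnn : ∀ i j, 0 ≤ Δ i j)
    (htend : ∀ i j, Tendsto (fun m : ℕ => |(Δ ^ m) i j|) atTop (nhds 0))
    (hHl : ((1 : Matrix (Fin n) (Fin n) ℝ) - Δ) * H = 1) :
    ∀ i j, 0 ≤ H i j := by
  intro i j
  have hgeom : ∀ m : ℕ, (∑ k ∈ Finset.range m, Δ ^ k) = H - Δ ^ m * H := by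
    intro m
    have hg := geom_sum_mul Δ m
    have h1 : (∑ k ∈ Finset.range m, Δ ^ k) * ((1 : Matrix (Fin n) (Fin n) ℝ) - Δ)
        = 1 - Δ ^ m := by
      calc (∑ k ∈ Finset.range m, Δ ^ k) * ((1 : Matrix (Fin n) (Fin n) ℝ) - Δ)
          = -((∑ k ∈ Finset.range m, Δ ^ k) * (Δ - 1)) := by noncomm_ring
        _ = -(Δ ^ m - 1) := by rw [hg]
        _ = 1 - Δ ^ m := by noncomm_ring
    calc (∑ k ∈ Finset.range m, Δ ^ k)
        = (∑ k ∈ Finset.range m, Δ ^ k) * (((1 : Matrix (Fin n) (Fin n) ℝ) - Δ) * H) := by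
          rw [hHl, mul_one]
      _ = ((∑ k ∈ Finset.range m, Δ ^ k) * ((1 : Matrix (Fin n) (Fin n) ℝ) - Δ)) * H := by
          rw [mul_assoc]
      _ = (1 - Δ ^ m) * H := by rw [h1]
      _ = H - Δ ^ m * H := by rw [sub_mul, one_mul]
  have ht : Tendsto (fun m : ℕ => (Δ ^ m * H) i j) atTop (nhds 0) := by
    have : ∀ m : ℕ, (Δ ^ m * H) i j = (Δ ^ m).mulVec (fun k => H k j) i := by
      intro m; rfl
    simp only [this]
    exact tendsto_pow_mulVec htend _ i
  have hle : ∀ m : ℕ, (Δ ^ m * H) i j ≤ H i j := by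
    intro m
    have h2 : (∑ k ∈ Finset.range m, Δ ^ k) i j = H i j - (Δ ^ m * H) i j := by
      rw [hgeom m, Matrix.sub_apply]
    have h3 : 0 ≤ (∑ k ∈ Finset.range m, Δ ^ k) i j := by
      rw [Matrix.sum_apply]
      exact Finset.sum_nonneg fun k _ => pow_entry_nonneg hnn k i j
    linarith
  exact le_of_tendsto ht (Eventually.of_forall hle)

/-- Kolev's entrywise bounds on the inverse of `1 + D` for `|D| ≤ Δ`. -/
lemma kolev_inv_bounds {Δ H D M : Matrix (Fin n) (Fin n) ℝ} (hnn : ∀ i j, 0 ≤ Δ i j)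
    (htend : ∀ i j, Tendsto (fun m : ℕ => |(Δ ^ m) i j|) atTop (nhds 0))
    (hHl : ((1 : Matrix (Fin n) (Fin n) ℝ) - Δ) * H = 1)
    (hD : ∀ i j, |D i j| ≤ Δ i j)
    (hM : ((1 : Matrix (Fin n) (Fin n) ℝ) + D) * M = 1) :
    (∀ i j, |M i j| ≤ H i j) ∧ (∀ j, H j j / (2 * H j j - 1) ≤ M j j) := by
  have hHnn : ∀ i j, 0 ≤ H i j := inv_entry_nonneg hnn htend hHl
  have hId : H = 1 + Δ * H := by rw [← hHl]; noncomm_ring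
  have hentry : ∀ i j, H i j = (if i = j then (1:ℝ) else 0) + (Δ * H) i j := by
    intro i j
    have h0 : H i j = ((1 : Matrix (Fin n) (Fin n) ℝ) + Δ * H) i j := by rw [← hId]
    rwa [Matrix.add_apply, Matrix.one_apply] at h0
  -- main per-column argument
  have main : ∀ j, (∀ i, |M i j| ≤ H i j) ∧ H j j / (2 * H j j - 1) ≤ M j j := by
    intro j
    set x : Fin n → ℝ := fun i => M i j with hxdef
    set b : Fin n → ℝ := fun i => if i = j then (1:ℝ) else 0 with hbdef
    have hb : ∀ i, 0 ≤ b i := by intro i; simp only [hbdef]; split <;> norm_num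
    have hx : ∀ i, x i + D.mulVec x i = b i := by
      intro i
      have h0 : ((1 + D) * M) i j = (1 : Matrix (Fin n) (Fin n) ℝ) i j := by rw [hM]
      rw [Matrix.add_mul, Matrix.one_mul, Matrix.add_apply, Matrix.one_apply] at h0
      have h1 : (D * M) i j = D.mulVec x i := by
        rw [Matrix.mul_apply]; rfl
      rw [h1] at h0
      exact h0
    set z : Fin n → ℝ := fun i => |x i| with hzdef
    have hzb : ∀ i, z i ≤ Δ.mulVec z i + b i := by
      intro i
      have h2 : x i = b i - D.mulVec x i := by linarith [hx i]
      have h5 := abs_mulVec_le hD (v := x) i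
      calc z i = |b i - D.mulVec x i| := by simp only [hzdef]; rw [← h2]
        _ ≤ |b i| + |D.mulVec x i| := abs_sub _ _
        _ = b i + |D.mulVec x i| := by rw [abs_of_nonneg (hb i)]
        _ ≤ b i + Δ.mulVec z i := by exact add_le_add_right h5 _
        _ = Δ.mulVec z i + b i := by ring
    have hzH : ∀ i, z i ≤ H.mulVec b i :=
      le_inv_mulVec hnn htend hHl hHnn hb hzb
    have hHb : ∀ i, H.mulVec b i = H i j := by
      intro i
      simp [Matrix.mulVec, dotProduct, hbdef, mul_ite, mul_one, mul_zero,
        Finset.sum_ite_eq']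
    have bound1 : ∀ i, |M i j| ≤ H i j := by
      intro i
      have := hzH i
      rw [hHb i] at this
      exact this
    refine ⟨bound1, ?_⟩
    -- positivity of the diagonal entry
    have hΔb : ∀ i, Δ.mulVec b i = Δ i j := by
      intro i
      simp [Matrix.mulVec, dotProduct, hbdef, mul_ite, mul_one, mul_zero,
        Finset.sum_ite_eq']
    have hxj_pos : 0 < x j := by
      by_contra hle
      push_neg at hle
      have hzd : ∀ i, z i ≤ Δ.mulVec z i := by
        intro i
        have h5 := abs_mulVec_le hD (v := x) i
        rcases eq_or_ne i j with rfl | hij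
        · have h3 := hx i
          have h4 : z i = -x i := abs_of_nonpos hle
          have h6 : D.mulVec x i ≤ Δ.mulVec z i := (le_abs_self _).trans h5
          have h7 : b i = 1 := by simp only [hbdef, if_pos rfl]
          rw [h7] at h3
          linarith
        · have h3 := hx i
          have h7 : b i = 0 := by simp only [hbdef, if_neg hij]
          rw [h7] at h3
          have h8 : z i = |D.mulVec x i| := by
            simp only [hzdef]
            rw [show x i = -(D.mulVec x i) by linarith, abs_neg]
          linarith [h5, h8.le, h8.ge]
      have hz0 := eq_zero_of_le_mulVec hnn htend (fun i => abs_nonneg (x i)) hzd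
      have hx0 : ∀ i, x i = 0 := fun i => abs_eq_zero.mp (hz0 i)
      have h3 := hx j
      have h7 : b j = 1 := by simp only [hbdef, if_pos rfl]
      have h6 : D.mulVec x j = 0 := by
        have h9 : x = (0 : Fin n → ℝ) := funext fun i => hx0 i
        rw [h9, Matrix.mulVec_zero]
        rfl
      rw [h7, hx0 j, h6] at h3
      norm_num at h3
    have hh1 : 1 ≤ H j j := by
      have := hentry j j
      rw [if_pos rfl] at this
      have h9 := mul_entry_nonneg hnn hHnn j j
      linarith
    have hhpos : (0:ℝ) < H j j := by linarith
    set w : Fin n → ℝ := fun k => H k j with hwdef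
    have hΔw : ∀ i, Δ.mulVec w i = H i j - b i := by
      intro i
      have h9 : (Δ * H) i j = Δ.mulVec w i := by rw [Matrix.mul_apply]; rfl
      have := hentry i j
      rw [h9] at this
      simp only [hbdef]
      linarith
    set r : Fin n → ℝ := fun k => if k = j then 0 else z k with hrdef
    set u : Fin n → ℝ := fun k => if k = j then 0 else (x j / H j j) * H k j with hudef
    have hzr : z = r + (x j) • b := by
      funext k
      rcases eq_or_ne k j with rfl | hkj
      · have : z k = x k := abs_of_pos hxj_pos
        simp only [Pi.add_apply, Pi.smul_apply, hrdef, hbdef, if_pos rfl, smul_eq_mul]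
        rw [this]; simp
      · simp only [Pi.add_apply, Pi.smul_apply, hrdef, hbdef, if_neg hkj, smul_eq_mul]
        ring
    have hΔz : ∀ i, Δ.mulVec z i = Δ.mulVec r i + x j * Δ i j := by
      intro i
      rw [hzr, Matrix.mulVec_add, Matrix.mulVec_smul, Pi.add_apply, Pi.smul_apply,
        smul_eq_mul, hΔb i]
    have hu_eq : u = (x j / H j j) • w - (x j) • b := by
      funext k
      rcases eq_or_ne k j with rfl | hkj
      · simp only [Pi.sub_apply, Pi.smul_apply, hudef, hbdef, hwdef, if_pos rfl, smul_eq_mul]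
        field_simp
        simp
      · simp only [Pi.sub_apply, Pi.smul_apply, hudef, hbdef, hwdef, if_neg hkj, smul_eq_mul]
        ring
    have hΔu : ∀ i, Δ.mulVec u i = (x j / H j j) * (H i j - b i) - x j * Δ i j := by
      intro i
      rw [hu_eq, Matrix.mulVec_sub, Matrix.mulVec_smul, Matrix.mulVec_smul, Pi.sub_apply,
        Pi.smul_apply, Pi.smul_apply, smul_eq_mul, smul_eq_mul, hΔw i, hΔb i]
    set s : Fin n → ℝ := fun k => max (r k - u k) 0 with hsdef
    have hs_nn : ∀ k, 0 ≤ s k := fun k => le_max_right _ _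
    have hs_le : ∀ i, s i ≤ Δ.mulVec s i := by
      intro i
      have hΔs_nn : 0 ≤ Δ.mulVec s i := mulVec_nonneg hnn hs_nn i
      rcases eq_or_ne i j with rfl | hij
      · have : s i = 0 := by
          simp [hsdef, hrdef, hudef]
        rw [this]; exact hΔs_nn
      · have hri : r i = z i := by simp only [hrdef, if_neg hij]
        have hui : u i = (x j / H j j) * H i j := by simp only [hudef, if_neg hij]
        have hbi : b i = 0 := by simp only [hbdef, if_neg hij]
        have h10 : z i ≤ Δ.mulVec z i := by
          have := hzb i
          rw [hbi] at this
          linarith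
        have h11 : r i - u i ≤ Δ.mulVec r i - Δ.mulVec u i := by
          have e1 := hΔz i
          have e2 := hΔu i
          rw [hbi] at e2
          have e3 : Δ.mulVec u i = u i - x j * Δ i j := by rw [e2, hui]; ring
          rw [hri]
          linarith
        have h12 : Δ.mulVec r i - Δ.mulVec u i ≤ Δ.mulVec s i := by
          have e4 : ∀ k, r k - u k ≤ s k := fun k => le_max_left _ _
          have e5 : Δ.mulVec r i - Δ.mulVec u i = Δ.mulVec (r - u) i := by
            rw [Matrix.mulVec_sub, Pi.sub_apply]
          rw [e5]
          exact mulVec_mono hnn (fun k => e4 k) i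
        have := le_max_left (r i - u i) 0
        exact max_le (h11.trans h12) hΔs_nn
    have hs0 := eq_zero_of_le_mulVec hnn htend hs_nn hs_le
    have hru : ∀ k, r k ≤ u k := by
      intro k
      have e6 : r k - u k ≤ s k := le_max_left _ _
      rw [hs0 k] at e6
      linarith
    -- final inequality
    have h3 := hx j
    have h7 : b j = 1 := by simp only [hbdef, if_pos rfl]
    rw [h7] at h3
    have h5 := abs_mulVec_le hD (v := x) j
    have h13 : 1 - x j ≤ Δ.mulVec z j := by
      have := (le_abs_self (D.mulVec x j)).trans h5
      linarith
    have h14 : Δ.mulVec r j ≤ Δ.mulVec u j := mulVec_mono hnn hru j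
    have h15 := hΔz j
    have h16 := hΔu j
    rw [h7] at h16
    have h17 : 1 - x j ≤ x j / H j j * (H j j - 1) := by
      calc 1 - x j ≤ Δ.mulVec z j := h13
        _ = Δ.mulVec r j + x j * Δ j j := h15
        _ ≤ Δ.mulVec u j + x j * Δ j j := by linarith
        _ = x j / H j j * (H j j - 1) := by rw [h16]; ring
    have h18 : x j / H j j * (H j j - 1) * H j j = x j * (H j j - 1) := by
      field_simp
    have h19 : (1 - x j) * H j j ≤ x j * (H j j - 1) := by
      have := mul_le_mul_of_nonneg_right h17 hhpos.le
      rw [h18] at this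
      exact this
    rw [div_le_iff₀ (by linarith : (0:ℝ) < 2 * H j j - 1)]
    nlinarith [h19]
  exact ⟨fun i j => (main j).1 i, fun j => (main j).2⟩
lemma mulVec_sum_smul {K : ℕ} (C : Matrix (Fin n) (Fin n) ℝ) (g : Fin K → ℝ)
    (v : Fin K → Fin n → ℝ) :
    C.mulVec (∑ k, g k • v k) = ∑ k, g k • C.mulVec (v k) := by
  funext i
  simp only [Matrix.mulVec, dotProduct, Finset.sum_apply, Pi.smul_apply, smul_eq_mul,
    Finset.mul_sum]
  rw [Finset.sum_comm]
  exact Finset.sum_congr rfl fun k _ => Finset.sum_congr rfl fun j _ => by ring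

lemma sum_smul_mulVec {K : ℕ} (N : Fin K → Matrix (Fin n) (Fin n) ℝ) (g : Fin K → ℝ)
    (v : Fin n → ℝ) :
    (∑ k, g k • N k).mulVec v = ∑ k, g k • (N k).mulVec v := by
  funext i
  simp only [Matrix.mulVec, dotProduct, Matrix.sum_apply, Matrix.smul_apply, Finset.sum_apply,
    Pi.smul_apply, smul_eq_mul, Finset.sum_mul]
  rw [Finset.sum_comm]
  refine Finset.sum_congr rfl fun k _ => ?_
  rw [Finset.mul_sum]
  exact Finset.sum_congr rfl fun j _ => by ring

lemma split_sum {K : ℕ} {Mo : Type*} [AddCommGroup Mo] [Module ℝ Mo] (p pc : Fin K → ℝ)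
    (A : Fin K → Mo) :
    ∑ k, p k • A k = (∑ k, pc k • A k) + ∑ k, (p k - pc k) • A k := by
  rw [← Finset.sum_add_distrib]
  refine Finset.sum_congr rfl fun k _ => ?_
  rw [sub_smul]
  abel

end real


/-- Part (ii) of Kolev's theorem: under the regularity assumptions, for every
parameter `p` in the box the matrix `A(p)` is invertible and the solution
`A(p)⁻¹ a(p)` equals `x̌ + V (p - p̌) + l` for some `l` with `|l| ≤ l̂`; in
particular the united parametric solution set is contained in the image of
the `p,l`-solution `x(p', l) = x̌ + V p' + l`. -/
theorem stmt_4 {n K : ℕ}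
    (A₀ : Matrix (Fin n) (Fin n) ℝ) (A : Fin K → Matrix (Fin n) (Fin n) ℝ)
    (a₀ : Fin n → ℝ) (a : Fin K → Fin n → ℝ)
    (pc ph : Fin K → ℝ) (hph : ∀ k, 0 ≤ ph k)
    (hreg : IsUnit (A₀ + ∑ k, pc k • A k))
    (C : Matrix (Fin n) (Fin n) ℝ) (hC : C = (A₀ + ∑ k, pc k • A k)⁻¹)
    (xc : Fin n → ℝ) (hxc : xc = C.mulVec (a₀ + ∑ k, pc k • a k))
    (Δ : Matrix (Fin n) (Fin n) ℝ)
    (hΔ : Δ = ∑ k, ph k • ((C * A k).map (fun x => |x|)))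
    (hρ : specRad Δ < 1)
    (F G B₀ : Matrix (Fin n) (Fin K) ℝ)
    (hF : ∀ i k, F i k = a k i)
    (hG : ∀ i k, G i k = (A k).mulVec xc i)
    (hB : B₀ = C * (F - G))
    (Hbar Hlow Hc Hr : Matrix (Fin n) (Fin n) ℝ)
    (hHbar : Hbar = ((1 : Matrix (Fin n) (Fin n) ℝ) - Δ)⁻¹)
    (hHlow : ∀ i j, Hlow i j = if i = j then Hbar j j / (2 * Hbar j j - 1) else -Hbar i j)
    (hHc : Hc = (1 / 2 : ℝ) • (Hbar + Hlow))
    (hHr : Hr = (1 / 2 : ℝ) • (Hbar - Hlow))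
    (V : Matrix (Fin n) (Fin K) ℝ) (hV : V = Hc * B₀)
    (lh : Fin n → ℝ)
    (hlh : lh = Hr.mulVec ((B₀.map (fun x => |x|)).mulVec ph)) :
    (∀ p : Fin K → ℝ, (∀ k, |p k - pc k| ≤ ph k) →
      IsUnit (A₀ + ∑ k, p k • A k) ∧
      ∃ l : Fin n → ℝ, (∀ i, |l i| ≤ lh i) ∧
        Matrix.mulVec (A₀ + ∑ k, p k • A k)⁻¹ (a₀ + ∑ k, p k • a k)
          = xc + V.mulVec (fun k => p k - pc k) + l) ∧
    {x : Fin n → ℝ | ∃ p : Fin K → ℝ, (∀ k, |p k - pc k| ≤ ph k) ∧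
        (A₀ + ∑ k, p k • A k).mulVec x = a₀ + ∑ k, p k • a k} ⊆
      {x : Fin n → ℝ | ∃ q : Fin K → ℝ, ∃ l : Fin n → ℝ,
        (∀ k, |q k| ≤ ph k) ∧ (∀ i, |l i| ≤ lh i) ∧
        x = xc + V.mulVec q + l} := by
  have hΔe : ∀ i j, Δ i j = ∑ k, ph k * |(C * A k) i j| := by
    intro i j
    rw [hΔ, Matrix.sum_apply]
    exact Finset.sum_congr rfl fun k _ => by
      rw [Matrix.smul_apply, Matrix.map_apply, smul_eq_mul]
  have hnn : ∀ i j, 0 ≤ Δ i j := by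
    intro i j
    rw [hΔe]
    exact Finset.sum_nonneg fun k _ => mul_nonneg (hph k) (abs_nonneg _)
  have htend := abs_entry_pow_tendsto Δ hρ
  -- (1 - Δ) is invertible and Hbar is its inverse
  have hU1 : IsUnit ((1 : Matrix (Fin n) (Fin n) ℝ) - Δ) := by
    have : (1 : Matrix (Fin n) (Fin n) ℝ) - Δ = 1 + (-Δ) := by rw [sub_eq_add_neg]
    rw [this]
    exact isUnit_one_add hnn htend (fun i j => by
      rw [Matrix.neg_apply, abs_neg, abs_of_nonneg (hnn i j)])
  have hU1d : IsUnit ((1 : Matrix (Fin n) (Fin n) ℝ) - Δ).det :=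
    (Matrix.isUnit_iff_isUnit_det _).mp hU1
  have hHl : ((1 : Matrix (Fin n) (Fin n) ℝ) - Δ) * Hbar = 1 := by
    rw [hHbar]; exact Matrix.mul_nonsing_inv _ hU1d
  have hHnn : ∀ i j, 0 ≤ Hbar i j := inv_entry_nonneg hnn htend hHl
  have hAcC : (A₀ + ∑ k, pc k • A k) * C = 1 := by
    rw [hC]; exact Matrix.mul_nonsing_inv _ ((Matrix.isUnit_iff_isUnit_det _).mp hreg)
  -- main part
  have part1 : ∀ p : Fin K → ℝ, (∀ k, |p k - pc k| ≤ ph k) →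
      IsUnit (A₀ + ∑ k, p k • A k) ∧
      ∃ l : Fin n → ℝ, (∀ i, |l i| ≤ lh i) ∧
        Matrix.mulVec (A₀ + ∑ k, p k • A k)⁻¹ (a₀ + ∑ k, p k • a k)
          = xc + V.mulVec (fun k => p k - pc k) + l := by
    intro p hbox
    set q : Fin K → ℝ := fun k => p k - pc k with hqdef
    set D : Matrix (Fin n) (Fin n) ℝ := ∑ k, q k • (C * A k) with hDdef
    have hDle : ∀ i j, |D i j| ≤ Δ i j := by
      intro i j
      have hDe : D i j = ∑ k, q k * (C * A k) i j := by
        rw [hDdef, Matrix.sum_apply]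
        exact Finset.sum_congr rfl fun k _ => by rw [Matrix.smul_apply, smul_eq_mul]
      rw [hDe, hΔe]
      calc |∑ k, q k * (C * A k) i j| ≤ ∑ k, |q k * (C * A k) i j| :=
            Finset.abs_sum_le_sum_abs _ _
        _ ≤ ∑ k, ph k * |(C * A k) i j| := by
            refine Finset.sum_le_sum fun k _ => ?_
            rw [abs_mul]
            exact mul_le_mul_of_nonneg_right (hbox k) (abs_nonneg _)
    have hUD : IsUnit ((1 : Matrix (Fin n) (Fin n) ℝ) + D) := isUnit_one_add hnn htend hDle
    have hUDd : IsUnit ((1 : Matrix (Fin n) (Fin n) ℝ) + D).det :=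
      (Matrix.isUnit_iff_isUnit_det _).mp hUD
    set M : Matrix (Fin n) (Fin n) ℝ := ((1 : Matrix (Fin n) (Fin n) ℝ) + D)⁻¹ with hMdef
    have hM1 : ((1 : Matrix (Fin n) (Fin n) ℝ) + D) * M = 1 := Matrix.mul_nonsing_inv _ hUDd
    have hM2 : M * ((1 : Matrix (Fin n) (Fin n) ℝ) + D) = 1 := Matrix.nonsing_inv_mul _ hUDd
    obtain ⟨bound1, bound2⟩ := kolev_inv_bounds hnn htend hHl hDle hM1
    -- factorization A(p) = A(pc) * (1 + D)
    have hfact : A₀ + ∑ k, p k • A k = (A₀ + ∑ k, pc k • A k) * (1 + D) := by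
      have h1 : (A₀ + ∑ k, pc k • A k) * D = ∑ k, q k • A k := by
        rw [hDdef, Finset.mul_sum]
        refine Finset.sum_congr rfl fun k _ => ?_
        rw [mul_smul_comm, ← mul_assoc, hAcC, one_mul]
      rw [mul_add, mul_one, h1, split_sum p pc A]
      abel
    have hunit : IsUnit (A₀ + ∑ k, p k • A k) := by
      rw [hfact]; exact hreg.mul hUD
    refine ⟨hunit, ?_⟩
    -- inverse factorization
    have hinv : (A₀ + ∑ k, p k • A k)⁻¹ = M * C := by
      rw [hfact, Matrix.mul_inv_rev, hMdef, hC]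
    -- key vector identity
    set ap : Fin n → ℝ := a₀ + ∑ k, p k • a k with hapdef
    set y : Fin n → ℝ := B₀.mulVec q with hydef
    have hFG : (F - G).mulVec q = (∑ k, q k • a k) - ∑ k, q k • (A k).mulVec xc := by
      funext i
      simp only [Matrix.mulVec, dotProduct, Matrix.sub_apply, Pi.sub_apply, Finset.sum_apply,
        Pi.smul_apply, smul_eq_mul]
      rw [← Finset.sum_sub_distrib]
      refine Finset.sum_congr rfl fun k _ => ?_
      rw [hF, hG]
      simp only [Matrix.mulVec, dotProduct]
      ring
    have hkey : C.mulVec ap = (1 + D).mulVec xc + y := by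
      have hap : ap = (a₀ + ∑ k, pc k • a k) + ∑ k, q k • a k := by
        rw [hapdef, split_sum p pc a]
        abel
      have hCap : C.mulVec ap = xc + ∑ k, q k • C.mulVec (a k) := by
        rw [hap, Matrix.mulVec_add, ← hxc, mulVec_sum_smul]
      have hDxc : D.mulVec xc = ∑ k, q k • C.mulVec ((A k).mulVec xc) := by
        rw [hDdef, sum_smul_mulVec]
        exact Finset.sum_congr rfl fun k _ => by rw [← Matrix.mulVec_mulVec]
      have hy2 : y = (∑ k, q k • C.mulVec (a k)) - ∑ k, q k • C.mulVec ((A k).mulVec xc) := by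
        rw [hydef, hB, ← Matrix.mulVec_mulVec, hFG, Matrix.mulVec_sub, mulVec_sum_smul,
          mulVec_sum_smul]
      rw [Matrix.add_mulVec, Matrix.one_mulVec, hCap, hDxc, hy2]
      abel
    -- the solution formula
    set l : Fin n → ℝ := M.mulVec y - Hc.mulVec y with hldef
    have hsol : Matrix.mulVec (A₀ + ∑ k, p k • A k)⁻¹ ap = xc + V.mulVec q + l := by
      rw [hinv, ← Matrix.mulVec_mulVec, hkey, Matrix.mulVec_add, Matrix.mulVec_mulVec, hM2,
        Matrix.one_mulVec, hV, ← Matrix.mulVec_mulVec, ← hydef, hldef]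
      funext i
      simp only [Pi.add_apply, Pi.sub_apply]
      ring
    -- the bound on l
    have hMHc : ∀ i k, |M i k - Hc i k| ≤ Hr i k := by
      intro i k
      have hup : M i k ≤ Hbar i k := (le_abs_self _).trans (bound1 i k)
      have hlo : Hlow i k ≤ M i k := by
        rcases eq_or_ne i k with rfl | hik
        · rw [hHlow, if_pos rfl]
          exact bound2 i
        · rw [hHlow, if_neg hik]
          have := (bound1 i k)
          have h2 := neg_abs_le (M i k)
          linarith [abs_le.mp (bound1 i k)]
      have hce : Hc i k = (1/2 : ℝ) * (Hbar i k + Hlow i k) := by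
        rw [hHc, Matrix.smul_apply, Matrix.add_apply, smul_eq_mul]
      have hre : Hr i k = (1/2 : ℝ) * (Hbar i k - Hlow i k) := by
        rw [hHr, Matrix.smul_apply, Matrix.sub_apply, smul_eq_mul]
      rw [abs_le, hce, hre]
      constructor <;> linarith
    have hy3 : ∀ k, |y k| ≤ (B₀.map (fun x => |x|)).mulVec ph k := by
      intro k
      rw [hydef]
      simp only [Matrix.mulVec, dotProduct, Matrix.map_apply]
      calc |∑ m, B₀ k m * q m| ≤ ∑ m, |B₀ k m * q m| := Finset.abs_sum_le_sum_abs _ _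
        _ ≤ ∑ m, |B₀ k m| * ph m := by
            refine Finset.sum_le_sum fun m _ => ?_
            rw [abs_mul]
            exact mul_le_mul_of_nonneg_left (hbox m) (abs_nonneg _)
    have hlbound : ∀ i, |l i| ≤ lh i := by
      intro i
      have hle : l i = ∑ k, (M i k - Hc i k) * y k := by
        rw [hldef]
        simp only [Pi.sub_apply, Matrix.mulVec, dotProduct, ← Finset.sum_sub_distrib]
        exact Finset.sum_congr rfl fun k _ => by ring
      have hlhe : lh i = ∑ k, Hr i k * ((B₀.map (fun x => |x|)).mulVec ph k) := by
        rw [hlh]; rfl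
      rw [hle, hlhe]
      calc |∑ k, (M i k - Hc i k) * y k| ≤ ∑ k, |(M i k - Hc i k) * y k| :=
            Finset.abs_sum_le_sum_abs _ _
        _ ≤ ∑ k, Hr i k * ((B₀.map (fun x => |x|)).mulVec ph k) := by
            refine Finset.sum_le_sum fun k _ => ?_
            rw [abs_mul]
            exact mul_le_mul (hMHc i k) (hy3 k) (abs_nonneg _)
              ((abs_nonneg _).trans (hMHc i k))
    exact ⟨l, hlbound, hsol⟩
  refine ⟨part1, ?_⟩
  rintro x ⟨p, hbox, heq⟩
  obtain ⟨hunit, l, hl, hsol⟩ := part1 p hbox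
  have hx : x = Matrix.mulVec (A₀ + ∑ k, p k • A k)⁻¹ (a₀ + ∑ k, p k • a k) := by
    rw [← heq, Matrix.mulVec_mulVec, Matrix.nonsing_inv_mul _
      ((Matrix.isUnit_iff_isUnit_det _).mp hunit), Matrix.one_mulVec]
  exact ⟨fun k => p k - pc k, l, hbox, hl, by rw [hx, hsol]⟩
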